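/- Let γ : S¹ → ℝ^n be a C¹ loop with γ'(t) ≠ 0 for all t, let K ⊂ ℝ^n × ℝ^n be compact and fiberwise convex with γ(S¹) ⊂ int(pr K), and suppose p₀, p₁ : S¹ → ℝ^n are measurable selections with (γ_s(t), (1-s)p₀(t) + s p₁(t)) ∈ K for all s ∈ [0,1], t ∈ S¹, where γ_s(t) = (s a + (1-s)) γ(t) + s x for fixed a ≥ 0, x ∈ ℝ^n. If L_s := ∫_{S¹} max_{p ∈ K_{γ_s(t)}} p · γ_s'(t) dt satisfies L_s ≥ ∫_{S¹} (1 + (a-1)s) γ'(t) · (p₀(t) + (p₁(t) - p₀(t))s) dt with equality at s = 0, L_0 = ∫ γ'·p₀ dt, L_1 = ∫ a γ'·p₁ dt, dL_s/ds|_{s=0} = 0, and L_0 ≥ 0, then L_1 - L_0 ≤ -(a-1)² L_0 ≤ 0. -/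

import Mathlib

/-- algebraic core of the key estimate in the proof that
`c_SH = c_EHZ` for convex bodies. Here `A = ∫ γ'·p₀`, `B = ∫ γ'·p₁`,
`L s = len_K(γ_s)`; from `L s ≥ (1+(a-1)s)(A + (B-A)s)` on `[0,1]` with equality
`L 0 = A`, `L 1 = aB`, vanishing derivative of `L` at `0`, and `L 0 ≥ 0`, one gets
`L 1 - L 0 ≤ -(a-1)² L 0 ≤ 0`. -/
theorem stmt14 (a A B : ℝ) (L : ℝ → ℝ) (ha : 0 ≤ a)
    (hineq : ∀ s ∈ Set.Icc (0 : ℝ) 1, (1 + (a - 1) * s) * (A + (B - A) * s) ≤ L s)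
    (hL0 : L 0 = A) (hL1 : L 1 = a * B)
    (hderiv : HasDerivWithinAt L 0 (Set.Icc (0 : ℝ) 1) 0)
    (hL0nonneg : 0 ≤ L 0) :
    L 1 - L 0 ≤ -(a - 1) ^ 2 * L 0 ∧ -(a - 1) ^ 2 * L 0 ≤ 0 := by
  set g : ℝ → ℝ := fun s => (1 + (a - 1) * s) * (A + (B - A) * s) with hg
  have hg0 : g 0 = A := by simp [hg]
  have hgd : HasDerivWithinAt g ((a - 1) * A + (B - A)) (Set.Icc (0 : ℝ) 1) 0 := by
    have : HasDerivAt g ((a - 1) * A + (B - A)) 0 := by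
      have h1 : HasDerivAt (fun s : ℝ => 1 + (a - 1) * s) (a - 1) 0 := by
        simpa using ((hasDerivAt_id (0:ℝ)).const_mul (a - 1)).const_add 1
      have h2 : HasDerivAt (fun s : ℝ => A + (B - A) * s) (B - A) 0 := by
        simpa using ((hasDerivAt_id (0:ℝ)).const_mul (B - A)).const_add A
      have := h1.mul h2
      exact this.congr_deriv (by ring)
    exact this.hasDerivWithinAt
  -- compare slopes
  have hslopeL := hasDerivWithinAt_iff_tendsto_slope.mp hderiv
  have hslopeg := hasDerivWithinAt_iff_tendsto_slope.mp hgd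
  have hne : (nhdsWithin (0:ℝ) (Set.Icc (0:ℝ) 1 \ {0})).NeBot := by
    have : Set.Icc (0:ℝ) 1 \ {0} = Set.Ioc (0:ℝ) 1 := by
      ext x
      constructor
      · rintro ⟨⟨h1, h2⟩, h3⟩
        exact ⟨lt_of_le_of_ne h1 (by simpa [eq_comm] using h3), h2⟩
      · rintro ⟨h1, h2⟩
        exact ⟨⟨le_of_lt h1, h2⟩, ne_of_gt h1⟩
    rw [this]
    exact left_nhdsWithin_Ioc_neBot (by norm_num)
  have hle : (a - 1) * A + (B - A) ≤ 0 := by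
    refine le_of_tendsto_of_tendsto hslopeg hslopeL ?_
    filter_upwards [self_mem_nhdsWithin] with s hmem
    obtain ⟨hs, hs0⟩ := hmem
    have hspos : 0 < s := lt_of_le_of_ne hs.1 (by simpa [eq_comm] using hs0)
    have hgs : g s = (1 + (a - 1) * s) * (A + (B - A) * s) := rfl
    have hq : (g s - A) / s ≤ (L s - A) / s := by
      apply div_le_div_of_nonneg_right ?_ hspos.le
      have := hineq s hs
      rw [hgs]; linarith
    rw [slope_def_field, slope_def_field, hg0, hL0]
    simpa using hq
  have hA : 0 ≤ A := by rwa [hL0] at hL0nonneg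
  constructor
  · rw [hL0, hL1]
    nlinarith [mul_nonneg ha (neg_nonneg.mpr hle)]
  · rw [hL0]
    nlinarith [sq_nonneg (a - 1)]
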